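/- Let g be a complex number, let λ > 0 and γ be reals with 0 < γ ≤ λ and 1 + λ·g ≠ 0, and set α = Re(λ·g). If −1 < α ≤ −1/2, then |(1 + γ·g)/(1 + λ·g)| ≥ γ/λ. -/

import Mathlib

/-- If `α = Re(λ·g)` satisfies `-1 < α ≤ -1/2` and `0 < γ ≤ λ`, then
`|(1 + γ·g)/(1 + λ·g)| ≥ γ/λ` (the modulus is at least the steady-state
gain `γ/λ`). -/
theorem Z_gain_ge_dc_of_alpha_in_interval
    (g : ℂ) (lam gam : ℝ) (hlam : 0 < lam) (hgam0 : 0 < gam) (hgam : gam ≤ lam)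
    (hne : 1 + (lam : ℂ) * g ≠ 0)
    (hα1 : -1 < ((lam : ℂ) * g).re) (hα2 : ((lam : ℂ) * g).re ≤ -(1 / 2)) :
    gam / lam ≤ ‖(1 + (gam : ℂ) * g) / (1 + (lam : ℂ) * g)‖ := by
  have hB : 0 < ‖1 + (lam : ℂ) * g‖ := by
    exact (norm_pos_iff.mpr hne)
  rw [norm_div, div_le_div_iff₀ hlam hB]
  have hA : 0 ≤ ‖1 + (gam : ℂ) * g‖ := norm_nonneg _
  apply le_of_pow_le_pow_left₀ (n := 2) two_ne_zero (by positivity)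
  have e1 : (‖1 + (gam : ℂ) * g‖) ^ 2 = (1 + gam * g.re) ^ 2 + (gam * g.im) ^ 2 := by
    rw [Complex.sq_norm, Complex.normSq_apply]
    simp [Complex.add_re, Complex.add_im, Complex.mul_re, Complex.mul_im]
    ring
  have e2 : (‖1 + (lam : ℂ) * g‖) ^ 2 = (1 + lam * g.re) ^ 2 + (lam * g.im) ^ 2 := by
    rw [Complex.sq_norm, Complex.normSq_apply]
    simp [Complex.add_re, Complex.add_im, Complex.mul_re, Complex.mul_im]
    ring
  have ha1 : -1 < lam * g.re := by simpa [Complex.mul_re] using hα1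
  have ha2 : lam * g.re ≤ -(1 / 2) := by simpa [Complex.mul_re] using hα2
  have hpos : 0 ≤ lam + gam + 2 * gam * (lam * g.re) := by
    nlinarith [mul_nonneg (sub_nonneg.2 hgam) (by linarith : (0:ℝ) ≤ -(1 + 2 * (lam * g.re)))]
  have key : gam ^ 2 * ((1 + lam * g.re) ^ 2 + (lam * g.im) ^ 2)
      ≤ lam ^ 2 * ((1 + gam * g.re) ^ 2 + (gam * g.im) ^ 2) := by
    nlinarith [mul_nonneg (sub_nonneg.2 hgam) hpos]
  rw [mul_pow, mul_pow, e1, e2]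
  linarith [key]
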